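/- Let ω : ℕ → ℝ be a diophantine sequence, let γ, c₁, Λ be positive reals with γ ≤ 1 and γ² ω_{k+1}² ≤ c₁ for all k, let l ≥ 1 be an integer, let q ∈ ℕ, and let r be a real number with 1/2 < r ≤ 1. Then there exists k₀ ∈ ℕ such that for all k ≥ k₀, writing m = 2^k and θ_k := (γ² ω_{k+1}² / c₁)^{1/m} · m^{−2/m}, one has θ_k^q · r · (1 − θ_k) > γ ω_{k+1} / (24 l Λ (2m+1)). In other words, the gap r_q − r_{q+1} between the radii r_q := θ_k^q r and r_{q+1} := θ_k^{q+1} r eventually exceeds ε := γ ω_{k+1} / (24 l Λ (2m+1)). -/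

import Mathlib

open Filter Real Topology


/-- Eventually the gap `r_q − r_{q+1} = θ_k^q·r·(1−θ_k)` between consecutive shrunken
radii exceeds `ε = γω_{k+1}/(24lΛ(2m+1))`, where `m = 2^k` and
`θ_k = (γ²ω_{k+1}²/c₁)^{1/m}·m^{−2/m}`. -/
theorem stmt_8 (ω : ℕ → ℝ) (hω : ∀ k, 1 ≤ k → 0 < ω k)
    (hω1 : ∀ k, 1 ≤ k → ω k ≤ 1) (hmono : ∀ k, 1 ≤ k → ω (k + 1) ≤ ω k)
    (hsum : Summable fun k : ℕ => -Real.log (ω (k + 1)) / 2 ^ (k + 1))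
    (γ c₁ Λ : ℝ) (hγ : 0 < γ) (hγ1 : γ ≤ 1) (hc₁ : 0 < c₁) (hΛ : 0 < Λ)
    (hbd : ∀ k : ℕ, γ ^ 2 * ω (k + 1) ^ 2 ≤ c₁)
    (l : ℕ) (hl : 1 ≤ l) (q : ℕ) (r : ℝ) (hr : 1 / 2 < r) (hr1 : r ≤ 1) :
    ∃ k₀ : ℕ, ∀ k, k₀ ≤ k →
      γ * ω (k + 1) / (24 * (l : ℝ) * Λ * (2 * 2 ^ k + 1)) <
        ((γ ^ 2 * ω (k + 1) ^ 2 / c₁) ^ ((1 : ℝ) / 2 ^ k) *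
            ((2 : ℝ) ^ k) ^ (-(2 : ℝ) / 2 ^ k)) ^ q * r *
          (1 - (γ ^ 2 * ω (k + 1) ^ 2 / c₁) ^ ((1 : ℝ) / 2 ^ k) *
            ((2 : ℝ) ^ k) ^ (-(2 : ℝ) / 2 ^ k)) := by
  have hω' : ∀ k : ℕ, 0 < ω (k + 1) := fun k => hω (k + 1) (Nat.le_add_left 1 k)
  have hω1' : ∀ k : ℕ, ω (k + 1) ≤ 1 := fun k => hω1 (k + 1) (Nat.le_add_left 1 k)
  set a : ℕ → ℝ := fun k => γ ^ 2 * ω (k + 1) ^ 2 / c₁ with ha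
  have ha_pos : ∀ k, 0 < a k := fun k => by
    have := hω' k; positivity
  have ha1 : ∀ k, a k ≤ 1 := fun k => div_le_one_of_le₀ (hbd k) hc₁.le
  have hla : ∀ k, Real.log (a k) ≤ 0 := fun k => Real.log_nonpos (ha_pos k).le (ha1 k)
  set x : ℕ → ℝ := fun k => (2 * k * Real.log 2 - Real.log (a k)) / 2 ^ k with hx
  -- θ_k = exp (-(x k))
  have hθ : ∀ k : ℕ, (a k) ^ ((1 : ℝ) / 2 ^ k) * ((2 : ℝ) ^ k) ^ (-(2 : ℝ) / 2 ^ k)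
      = Real.exp (-(x k)) := by
    intro k
    have h2 : (0 : ℝ) < (2 : ℝ) ^ k := by positivity
    rw [Real.rpow_def_of_pos (ha_pos k), Real.rpow_def_of_pos h2, ← Real.exp_add,
      Real.log_pow]
    congr 1
    simp only [hx]
    ring
  -- x tends to 0
  have hx_tendsto : Tendsto x atTop (𝓝 0) := by
    have hlog : ∀ k : ℕ, Real.log (a k) = 2 * Real.log γ + 2 * Real.log (ω (k + 1)) - Real.log c₁ := by
      intro k
      rw [ha]
      rw [Real.log_div (by have := hω' k; positivity) hc₁.ne', Real.log_mul (by have := hω' k; positivity) (by have := hω' k; positivity),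
        Real.log_pow, Real.log_pow]
      push_cast; ring
    have heq : ∀ k : ℕ, x k = 2 * Real.log 2 * ((k : ℝ) * (1/2 : ℝ) ^ k)
        + (Real.log c₁ - 2 * Real.log γ) * (1/2 : ℝ) ^ k
        + 4 * (-Real.log (ω (k + 1)) / 2 ^ (k + 1)) := by
      intro k
      rw [hx]
      simp only [hlog]
      have h2 : ((2 : ℝ) ^ k) ≠ 0 := by positivity
      have h2' : ((2 : ℝ) ^ (k+1)) ≠ 0 := by positivity
      rw [one_div_pow, pow_succ]
      ring
    have t1 : Tendsto (fun k : ℕ => (k : ℝ) * (1/2 : ℝ) ^ k) atTop (𝓝 0) :=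
      tendsto_self_mul_const_pow_of_lt_one (by norm_num) (by norm_num)
    have t2 : Tendsto (fun k : ℕ => ((1:ℝ)/2) ^ k) atTop (𝓝 0) :=
      tendsto_pow_atTop_nhds_zero_of_lt_one (by norm_num) (by norm_num)
    have t3 : Tendsto (fun k : ℕ => -Real.log (ω (k + 1)) / 2 ^ (k + 1)) atTop (𝓝 0) :=
      hsum.tendsto_atTop_zero
    have := ((t1.const_mul (2 * Real.log 2)).add
        (t2.const_mul (Real.log c₁ - 2 * Real.log γ))).add (t3.const_mul 4)
    simp only [mul_zero, add_zero, zero_add] at this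
    exact Tendsto.congr (fun k => (heq k).symm) this
  -- eventual facts
  have E1 : ∀ᶠ k : ℕ in atTop, x k < 1 := hx_tendsto.eventually_lt_const one_pos
  have E2 : ∀ᶠ k : ℕ in atTop, (1:ℝ)/2 < Real.exp (-(x k)) ^ q * r := by
    have hc : Continuous fun t : ℝ => Real.exp (-t) ^ q * r :=
      ((Real.continuous_exp.comp continuous_neg).pow q).mul continuous_const
    have : Tendsto (fun k => Real.exp (-(x k)) ^ q * r) atTop (𝓝 (Real.exp (-0) ^ q * r)) :=
      (hc.tendsto 0).comp hx_tendsto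
    simp only [neg_zero, Real.exp_zero, one_pow, one_mul] at this
    exact this.eventually_const_lt hr
  have E3 : ∀ᶠ k : ℕ in atTop, 1 / (12 * Λ) < (k : ℝ) * Real.log 2 := by
    have : Tendsto (fun k : ℕ => (k : ℝ) * Real.log 2) atTop atTop :=
      (tendsto_natCast_atTop_atTop).atTop_mul_const (Real.log_pos one_lt_two)
    exact this.eventually_gt_atTop _
  obtain ⟨k₀, hk₀⟩ := eventually_atTop.1 ((E1.and E2).and E3)
  refine ⟨k₀, fun k hk => ?_⟩
  obtain ⟨⟨h1, h2⟩, h3⟩ := hk₀ k hk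
  rw [hθ k]
  set m : ℝ := (2:ℝ) ^ k with hm
  have hm0 : (0:ℝ) < m := by positivity
  have hx_ge : (k : ℝ) * Real.log 2 / m ≤ x k := by
    rw [hx]
    apply div_le_div_of_nonneg_right ?_ hm0.le
    nlinarith [hla k, Real.log_pos (show (1:ℝ) < 2 by norm_num), Nat.cast_nonneg (α := ℝ) k]
  have hx_nonneg : 0 ≤ x k := le_trans (by positivity) hx_ge
  -- 1 - exp(-x) ≥ x/2 for 0 ≤ x ≤ 1
  have hgap : x k / 2 ≤ 1 - Real.exp (-(x k)) := by
    have h1 : x k + 1 ≤ Real.exp (x k) := Real.add_one_le_exp _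
    have h2 : Real.exp (-(x k)) * Real.exp (x k) = 1 := by
      rw [← Real.exp_add]; simp
    have h3 : 0 < Real.exp (-(x k)) := Real.exp_pos _
    nlinarith [mul_le_mul_of_nonneg_left h1 h3.le]
  set θ : ℝ := Real.exp (-(x k)) with hθk
  have hθ1 : θ ≤ 1 := Real.exp_le_one_iff.2 (by linarith)
  have hεle : γ * ω (k + 1) / (24 * (l : ℝ) * Λ * (2 * m + 1)) ≤ 1 / (48 * Λ * m) := by
    have hl' : (1:ℝ) ≤ (l:ℝ) := by exact_mod_cast hl
    apply div_le_div₀ (by positivity) ?_ (by positivity) ?_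
    · exact mul_le_one₀ hγ1 (hω' k).le (hω1' k)
    · nlinarith [mul_nonneg (mul_nonneg (by linarith : (0:ℝ) ≤ (l:ℝ) - 1) hm0.le) hΛ.le,
        mul_nonneg (by linarith : (0:ℝ) ≤ (l:ℝ) - 1) hΛ.le]
  have h3' : (1:ℝ) ≤ (k : ℝ) * Real.log 2 * (12 * Λ) := by
    rw [div_lt_iff₀ (by positivity)] at h3; linarith
  calc γ * ω (k + 1) / (24 * (l : ℝ) * Λ * (2 * m + 1)) ≤ 1 / (48 * Λ * m) := hεle
    _ ≤ (1/2) * ((k : ℝ) * Real.log 2 / (2 * m)) := by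
        rw [show (1:ℝ)/2 * ((k : ℝ) * Real.log 2 / (2 * m)) = (k : ℝ) * Real.log 2 / (4 * m) by
          ring, div_le_div_iff₀ (by positivity) (by positivity)]
        nlinarith [mul_le_mul_of_nonneg_right h3' hm0.le]
    _ < θ ^ q * r * ((k : ℝ) * Real.log 2 / (2 * m)) := by
        have hklog : 0 < (k : ℝ) * Real.log 2 := by nlinarith
        exact mul_lt_mul_of_pos_right h2 (by positivity)
    _ ≤ θ ^ q * r * (1 - θ) := by
        apply mul_le_mul_of_nonneg_left ?_ (by linarith)
        calc (k : ℝ) * Real.log 2 / (2 * m) = ((k : ℝ) * Real.log 2 / m) / 2 := by ring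
          _ ≤ x k / 2 := by linarith [hx_ge]
          _ ≤ 1 - θ := hgap
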